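/- Let A be a nonnegative n×n matrix (entrywise) and let x : [0,∞) → ℝ^n be C¹ with x(t) ≥ 0 entrywise and x'(t) ≤ A x(t) entrywise for all t. Then x(t) ≤ e^{tA} x(0) entrywise for all t ≥ 0. -/

import Mathlib

open Matrix NormedSpace

section Aux

variable {n : ℕ}

/-- entries of powers of an entrywise nonneg matrix are nonneg -/
lemma aux_pow_nonneg (B : Matrix (Fin n) (Fin n) ℝ) (hB : ∀ i j, 0 ≤ B i j) :
    ∀ m : ℕ, ∀ i j, 0 ≤ (B ^ m) i j := by
  intro m
  induction m with
  | zero => intro i j; simp [Matrix.one_apply]; positivity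
  | succ m ih =>
      intro i j
      rw [pow_succ, Matrix.mul_apply]
      exact Finset.sum_nonneg fun k _ => mul_nonneg (ih i k) (hB k j)

/-- entries of exp of an entrywise nonneg matrix are nonneg -/
lemma aux_exp_nonneg (B : Matrix (Fin n) (Fin n) ℝ) (hB : ∀ i j, 0 ≤ B i j) :
    ∀ i j, 0 ≤ (exp B) i j := by
  letI : SeminormedRing (Matrix (Fin n) (Fin n) ℝ) := Matrix.linftyOpSemiNormedRing
  letI : NormedRing (Matrix (Fin n) (Fin n) ℝ) := Matrix.linftyOpNormedRing
  letI : NormedAlgebra ℝ (Matrix (Fin n) (Fin n) ℝ) := Matrix.linftyOpNormedAlgebra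
  intro i j
  have hs : HasSum (fun m : ℕ => ((Nat.factorial m : ℝ)⁻¹) • B ^ m) (exp B) :=
    exp_series_hasSum_exp' B
  have hij : HasSum (fun m : ℕ => (((Nat.factorial m : ℝ))⁻¹) • (B ^ m) i j) ((exp B) i j) := by
    have h1 := Pi.hasSum.mp hs i
    have h2 := Pi.hasSum.mp h1 j
    exact h2
  refine hij.nonneg fun m => ?_
  exact smul_nonneg (by positivity) (aux_pow_nonneg B hB m i j)

/-- entry map as a continuous linear map -/
noncomputable def entryCLM (i j : Fin n) : Matrix (Fin n) (Fin n) ℝ →L[ℝ] ℝ := by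
  letI : SeminormedRing (Matrix (Fin n) (Fin n) ℝ) := Matrix.linftyOpSemiNormedRing
  letI : NormedRing (Matrix (Fin n) (Fin n) ℝ) := Matrix.linftyOpNormedRing
  letI : NormedAlgebra ℝ (Matrix (Fin n) (Fin n) ℝ) := Matrix.linftyOpNormedAlgebra
  exact LinearMap.toContinuousLinearMap
    { toFun := fun M => M i j
      map_add' := fun M N => rfl
      map_smul' := fun c M => rfl }

end Aux

theorem stmt_15 {n : ℕ} (A : Matrix (Fin n) (Fin n) ℝ) (hA : ∀ i j, 0 ≤ A i j)
    (x x' : ℝ → Fin n → ℝ)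
    (hderiv : ∀ j t, HasDerivAt (fun s => x s j) (x' t j) t)
    (hcont : ∀ j, Continuous fun t => x' t j)
    (hpos : ∀ t ≥ 0, ∀ j, 0 ≤ x t j)
    (hineq : ∀ t ≥ 0, ∀ j, x' t j ≤ (A *ᵥ x t) j) :
    ∀ t ≥ 0, ∀ j, x t j ≤ (NormedSpace.exp (t • A) *ᵥ x 0) j := by
  letI : SeminormedRing (Matrix (Fin n) (Fin n) ℝ) := Matrix.linftyOpSemiNormedRing
  letI : NormedRing (Matrix (Fin n) (Fin n) ℝ) := Matrix.linftyOpNormedRing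
  letI : NormedAlgebra ℝ (Matrix (Fin n) (Fin n) ℝ) := Matrix.linftyOpNormedAlgebra
  intro T hT j
  set E : ℝ → Matrix (Fin n) (Fin n) ℝ := fun t => exp ((T - t) • A) with hE
  -- derivative of E
  have hEderiv : ∀ t, HasDerivAt E (-(E t * A)) t := by
    intro t
    have h1 : HasDerivAt (fun u : ℝ => exp (u • A)) (exp ((T - t) • A) * A) (T - t) :=
      hasDerivAt_exp_smul_const A (T - t)
    have h2 : HasDerivAt (fun u : ℝ => T - u) (-1) t := by
      simpa using (hasDerivAt_id t).const_sub T
    have := h1.scomp t h2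
    simp only [neg_smul, one_smul, Function.comp_def] at this
    exact this
  have hEentry : ∀ t k l, HasDerivAt (fun t => E t k l) (-(E t * A) k l) t := by
    intro t k l
    exact (entryCLM k l).hasFDerivAt.comp_hasDerivAt t (hEderiv t)
  -- nonneg entries of E for t ≤ T
  have hEnn : ∀ t, t ≤ T → ∀ k l, 0 ≤ E t k l := by
    intro t ht k l
    exact aux_exp_nonneg _ (fun i j' => mul_nonneg (by linarith) (hA i j')) k l
  set g : ℝ → ℝ := fun t => ∑ k, E t j k * x t k with hg
  have hgderiv : ∀ t, HasDerivAt g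
      (∑ k, (-(E t * A) j k * x t k + E t j k * x' t k)) t := by
    intro t
    exact HasDerivAt.fun_sum fun k _ => (hEentry t j k).mul (hderiv k t)
  have hgd : ∀ t, deriv g t = ∑ k, (-(E t * A) j k * x t k + E t j k * x' t k) :=
    fun t => (hgderiv t).deriv
  have hgnonpos : ∀ t, 0 ≤ t → t ≤ T → deriv g t ≤ 0 := by
    intro t ht0 htT
    rw [hgd t]
    have key : ∀ k, -(E t * A) j k * x t k + E t j k * x' t k
        ≤ E t j k * ((A *ᵥ x t) k) - (E t * A) j k * x t k := by
      intro k
      have := mul_le_mul_of_nonneg_left (hineq t ht0 k) (hEnn t htT j k)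
      linarith
    calc ∑ k, (-(E t * A) j k * x t k + E t j k * x' t k)
        ≤ ∑ k, (E t j k * ((A *ᵥ x t) k) - (E t * A) j k * x t k) :=
          Finset.sum_le_sum fun k _ => key k
      _ = (E t *ᵥ (A *ᵥ x t)) j - ((E t * A) *ᵥ x t) j := by
          rw [Finset.sum_sub_distrib]
          simp [Matrix.mulVec, dotProduct]
      _ = 0 := by rw [Matrix.mulVec_mulVec]; ring
  -- antitone
  have hanti : AntitoneOn g (Set.Icc 0 T) := by
    apply antitoneOn_of_deriv_nonpos (convex_Icc 0 T)
    · exact (fun t _ => ((hgderiv t).continuousAt).continuousWithinAt)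
    · intro t ht
      exact (hgderiv t).differentiableAt.differentiableWithinAt
    · intro t ht
      rw [interior_Icc] at ht
      exact hgnonpos t ht.1.le ht.2.le
  have hTle : g T ≤ g 0 := hanti (Set.mem_Icc.mpr ⟨le_refl 0, hT⟩) (Set.mem_Icc.mpr ⟨hT, le_refl T⟩) hT
  have hgT : g T = x T j := by
    simp [hg, hE, Matrix.one_apply, Finset.sum_ite_eq, NormedSpace.exp_zero]
  have hg0 : g 0 = (exp (T • A) *ᵥ x 0) j := by
    simp [hg, hE, Matrix.mulVec, dotProduct]
  rw [hgT, hg0] at hTle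
  exact hTle
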